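/- Let $f, g : \mathbb{R}^d \to [0,\infty)$ be integrable, spherically symmetric (i.e., depending only on $|x|$) and radially nonincreasing. Then the convolution $f * g$ attains its supremum at the origin: for all $\lambda' \in \mathbb{R}^d$, $\int f(\lambda' - \lambda) g(\lambda)\, d\lambda \le \int f(\lambda) g(\lambda)\, d\lambda$. -/

import Mathlib

open MeasureTheory
open Set
open scoped ENNReal

theorem stmt_2 (d : ℕ) (f g : EuclideanSpace ℝ (Fin d) → ℝ)
    (hf0 : ∀ x, 0 ≤ f x) (hg0 : ∀ x, 0 ≤ g x)
    (hfi : Integrable f) (hgi : Integrable g)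
    (hfrad : ∀ x y : EuclideanSpace ℝ (Fin d), ‖x‖ ≤ ‖y‖ → f y ≤ f x)
    (hgrad : ∀ x y : EuclideanSpace ℝ (Fin d), ‖x‖ ≤ ‖y‖ → g y ≤ g x)
    (l' : EuclideanSpace ℝ (Fin d)) :
    ∫ l, f (l' - l) * g l ≤ ∫ l, f l * g l := by
  classical
  rcases Nat.eq_zero_or_pos d with hd | hd
  · subst hd
    haveI : Subsingleton (EuclideanSpace ℝ (Fin 0)) :=
      inferInstanceAs (Subsingleton (PiLp 2 fun _ : Fin 0 => ℝ))
    have h : (fun l : EuclideanSpace ℝ (Fin 0) => f (l' - l) * g l) = fun l => f l * g l := by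
      funext l; rw [Subsingleton.elim (l' - l) l]
    rw [h]
  obtain ⟨i⟩ : Nonempty (Fin d) := ⟨⟨0, hd⟩⟩
  set e : EuclideanSpace ℝ (Fin d) := EuclideanSpace.single i (1 : ℝ) with he_def
  have he : ‖e‖ = 1 := by simp [he_def, EuclideanSpace.norm_single]
  -- radial nonincreasing functions are measurable
  have keymeas : ∀ F : EuclideanSpace ℝ (Fin d) → ℝ,
      (∀ x y : EuclideanSpace ℝ (Fin d), ‖x‖ ≤ ‖y‖ → F y ≤ F x) → Measurable F := by
    intro F hF
    have hsm : ∀ r : ℝ, ‖(max r 0 : ℝ) • e‖ = max r 0 := by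
      intro r
      rw [norm_smul, he, mul_one, Real.norm_eq_abs, abs_of_nonneg (le_max_right _ _)]
    have hanti : Antitone (fun r : ℝ => F ((max r 0 : ℝ) • e)) := by
      intro r r' hrr'
      apply hF
      rw [hsm, hsm]
      exact max_le_max hrr' le_rfl
    have hFeq : F = (fun r : ℝ => F ((max r 0 : ℝ) • e)) ∘ norm := by
      funext x
      have h1 : ‖(max ‖x‖ 0 : ℝ) • e‖ = ‖x‖ := by rw [hsm, max_eq_left (norm_nonneg x)]
      exact le_antisymm (hF _ _ h1.le) (hF _ _ h1.ge)
    rw [hFeq]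
    exact hanti.measurable.comp measurable_norm
  have hfm : Measurable f := keymeas f hfrad
  have hgm : Measurable g := keymeas g hgrad
  have hFm : Measurable (fun l : EuclideanSpace ℝ (Fin d) => f (l' - l)) :=
    hfm.comp (measurable_const.sub measurable_id)
  set μ : Measure (EuclideanSpace ℝ (Fin d)) := volume with hμ_def
  -- superlevel sets
  set A : ℝ → Set (EuclideanSpace ℝ (Fin d)) := fun t => {z | t < f z} with hA_def
  set B : ℝ → Set (EuclideanSpace ℝ (Fin d)) := fun s => {z | s < g z} with hB_def
  have hAmeas : ∀ t, MeasurableSet (A t) := fun t => measurableSet_lt measurable_const hfm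
  have hBmeas : ∀ s, MeasurableSet (B s) := fun s => measurableSet_lt measurable_const hgm
  -- superlevel sets of f and g are comparable
  have hcomp : ∀ t s : ℝ, A t ⊆ B s ∨ B s ⊆ A t := by
    intro t s
    by_contra h
    push_neg at h
    obtain ⟨h1, h2⟩ := h
    rw [Set.not_subset] at h1 h2
    obtain ⟨a, ha, ha'⟩ := h1
    obtain ⟨b, hb, hb'⟩ := h2
    simp only [hA_def, hB_def, Set.mem_setOf_eq, not_lt] at ha ha' hb hb'
    have h1 : ¬ ‖a‖ ≤ ‖b‖ := fun hh => absurd (hgrad a b hh) (by linarith)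
    have h2 : ¬ ‖b‖ ≤ ‖a‖ := fun hh => absurd (hfrad b a hh) (by linarith)
    exact h1 (le_of_not_ge h2)
  have hmin : ∀ t s : ℝ, μ (A t ∩ B s) = min (μ (A t)) (μ (B s)) := by
    intro t s
    rcases hcomp t s with h | h
    · rw [Set.inter_eq_left.mpr h]
      exact (min_eq_left (measure_mono h)).symm
    · rw [Set.inter_eq_right.mpr h]
      exact (min_eq_right (measure_mono h)).symm
  -- the translated superlevel set of f has the same measure
  have htrans : ∀ t : ℝ, μ ((fun l : EuclideanSpace ℝ (Fin d) => l' - l) ⁻¹' (A t)) = μ (A t) := by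
    intro t
    have h : (fun l : EuclideanSpace ℝ (Fin d) => l' - l) ⁻¹' (A t)
        = Neg.neg ⁻¹' ((fun l => l' + l) ⁻¹' (A t)) := by
      ext l; simp [sub_eq_add_neg]
    rw [h, Measure.measure_preimage_neg, measure_preimage_add]
  -- layer cake representation
  have layer : ∀ (F : EuclideanSpace ℝ (Fin d) → ℝ), (∀ x, 0 ≤ F x) →
      ∀ x : EuclideanSpace ℝ (Fin d),
      ENNReal.ofReal (F x)
        = ∫⁻ t in Ioi (0:ℝ), ({z : EuclideanSpace ℝ (Fin d) | t < F z}).indicator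
            (fun _ => (1:ℝ≥0∞)) x := by
    intro F hF0 x
    have h1 : ∀ t : ℝ, ({z : EuclideanSpace ℝ (Fin d) | t < F z}).indicator
        (fun _ => (1:ℝ≥0∞)) x = (Iio (F x)).indicator (fun _ => (1:ℝ≥0∞)) t := by
      intro t
      by_cases h : t < F x <;> simp [Set.indicator, h]
    simp_rw [h1]
    rw [lintegral_indicator measurableSet_Iio, setLIntegral_one,
      Measure.restrict_apply measurableSet_Iio, Set.Iio_inter_Ioi, Real.volume_Ioo, sub_zero]
  -- main double layer cake identity
  have main : ∀ (F : EuclideanSpace ℝ (Fin d) → ℝ), Measurable F → (∀ x, 0 ≤ F x) →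
      ∫⁻ l, ENNReal.ofReal (F l) * ENNReal.ofReal (g l) ∂μ
        = ∫⁻ p in (Ioi (0:ℝ)) ×ˢ (Ioi (0:ℝ)),
            μ ({z : EuclideanSpace ℝ (Fin d) | p.1 < F z} ∩ B p.2) ∂(volume.prod volume) := by
    intro F hFmeas hF0
    set ν : Measure ℝ := volume.restrict (Ioi (0:ℝ)) with hν
    have hind : ∀ (H : EuclideanSpace ℝ (Fin d) → ℝ) (l : EuclideanSpace ℝ (Fin d)),
        (fun t : ℝ => Set.indicator {z : EuclideanSpace ℝ (Fin d) | t < H z}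
          (fun _ => (1:ℝ≥0∞)) l) = (Iio (H l)).indicator (fun _ => (1:ℝ≥0∞)) := by
      intro H l
      funext t
      by_cases h : t < H l <;> simp [Set.indicator, h]
    have h1 : ∀ l, ENNReal.ofReal (F l) * ENNReal.ofReal (g l)
        = ∫⁻ p : ℝ × ℝ, (Set.indicator {z : EuclideanSpace ℝ (Fin d) | p.1 < F z}
            (fun _ => (1:ℝ≥0∞)) l)
          * (Set.indicator {z : EuclideanSpace ℝ (Fin d) | p.2 < g z}
            (fun _ => (1:ℝ≥0∞)) l) ∂(ν.prod ν) := by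
      intro l
      rw [layer F hF0 l, layer g hg0 l]
      refine (lintegral_prod_mul ?_ ?_).symm
      · rw [hind F l]
        exact (measurable_const.indicator measurableSet_Iio).aemeasurable
      · rw [hind g l]
        exact (measurable_const.indicator measurableSet_Iio).aemeasurable
    have hm1 : Measurable (fun q : EuclideanSpace ℝ (Fin d) × (ℝ × ℝ) =>
        Set.indicator {z : EuclideanSpace ℝ (Fin d) | q.2.1 < F z} (fun _ => (1:ℝ≥0∞)) q.1) := by
      have heq : (fun q : EuclideanSpace ℝ (Fin d) × (ℝ × ℝ) =>
          Set.indicator {z : EuclideanSpace ℝ (Fin d) | q.2.1 < F z} (fun _ => (1:ℝ≥0∞)) q.1)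
          = Set.indicator {q : EuclideanSpace ℝ (Fin d) × (ℝ × ℝ) | q.2.1 < F q.1}
            (fun _ => (1:ℝ≥0∞)) := by
        funext q
        by_cases h : q.2.1 < F q.1 <;> simp [Set.indicator, h]
      rw [heq]
      exact measurable_const.indicator
        (measurableSet_lt (measurable_fst.comp measurable_snd) (hFmeas.comp measurable_fst))
    have hm2 : Measurable (fun q : EuclideanSpace ℝ (Fin d) × (ℝ × ℝ) =>
        Set.indicator {z : EuclideanSpace ℝ (Fin d) | q.2.2 < g z} (fun _ => (1:ℝ≥0∞)) q.1) := by
      have heq : (fun q : EuclideanSpace ℝ (Fin d) × (ℝ × ℝ) =>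
          Set.indicator {z : EuclideanSpace ℝ (Fin d) | q.2.2 < g z} (fun _ => (1:ℝ≥0∞)) q.1)
          = Set.indicator {q : EuclideanSpace ℝ (Fin d) × (ℝ × ℝ) | q.2.2 < g q.1}
            (fun _ => (1:ℝ≥0∞)) := by
        funext q
        by_cases h : q.2.2 < g q.1 <;> simp [Set.indicator, h]
      rw [heq]
      exact measurable_const.indicator
        (measurableSet_lt (measurable_snd.comp measurable_snd) (hgm.comp measurable_fst))
    calc ∫⁻ l, ENNReal.ofReal (F l) * ENNReal.ofReal (g l) ∂μ
        = ∫⁻ l, ∫⁻ p : ℝ × ℝ, (Set.indicator {z : EuclideanSpace ℝ (Fin d) | p.1 < F z}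
              (fun _ => (1:ℝ≥0∞)) l)
            * (Set.indicator {z : EuclideanSpace ℝ (Fin d) | p.2 < g z}
              (fun _ => (1:ℝ≥0∞)) l) ∂(ν.prod ν) ∂μ := lintegral_congr h1
      _ = ∫⁻ p : ℝ × ℝ, ∫⁻ l, (Set.indicator {z : EuclideanSpace ℝ (Fin d) | p.1 < F z}
              (fun _ => (1:ℝ≥0∞)) l)
            * (Set.indicator {z : EuclideanSpace ℝ (Fin d) | p.2 < g z}
              (fun _ => (1:ℝ≥0∞)) l) ∂μ ∂(ν.prod ν) :=
          lintegral_lintegral_swap (hm1.mul hm2).aemeasurable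
      _ = ∫⁻ p : ℝ × ℝ, μ ({z : EuclideanSpace ℝ (Fin d) | p.1 < F z}
            ∩ {z : EuclideanSpace ℝ (Fin d) | p.2 < g z}) ∂(ν.prod ν) := by
          refine lintegral_congr fun p => ?_
          have heq : ∀ l : EuclideanSpace ℝ (Fin d),
              (Set.indicator {z : EuclideanSpace ℝ (Fin d) | p.1 < F z}
                (fun _ => (1:ℝ≥0∞)) l)
              * (Set.indicator {z : EuclideanSpace ℝ (Fin d) | p.2 < g z}
                (fun _ => (1:ℝ≥0∞)) l)
              = Set.indicator ({z : EuclideanSpace ℝ (Fin d) | p.1 < F z}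
                  ∩ {z : EuclideanSpace ℝ (Fin d) | p.2 < g z}) (fun _ => (1:ℝ≥0∞)) l := by
            intro l
            by_cases h1 : p.1 < F l <;> by_cases h2 : p.2 < g l <;>
              simp [Set.indicator, Set.mem_inter_iff, h1, h2]
          simp_rw [heq]
          exact lintegral_indicator_one
            ((measurableSet_lt measurable_const hFmeas).inter
              (measurableSet_lt measurable_const hgm))
      _ = ∫⁻ p in (Ioi (0:ℝ)) ×ˢ (Ioi (0:ℝ)),
            μ ({z : EuclideanSpace ℝ (Fin d) | p.1 < F z}
              ∩ {z : EuclideanSpace ℝ (Fin d) | p.2 < g z}) ∂(volume.prod volume) := by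
          rw [hν, Measure.prod_restrict]
  have hmainF := main f hfm hf0
  have hmainF' := main (fun l => f (l' - l)) hFm (fun l => hf0 _)
  -- comparison of the two double integrals
  have hcompare :
      (∫⁻ p in (Ioi (0:ℝ)) ×ˢ (Ioi (0:ℝ)),
        μ ({z : EuclideanSpace ℝ (Fin d) | p.1 < f (l' - z)} ∩ B p.2) ∂(volume.prod volume))
      ≤ ∫⁻ p in (Ioi (0:ℝ)) ×ˢ (Ioi (0:ℝ)),
        μ ({z : EuclideanSpace ℝ (Fin d) | p.1 < f z} ∩ B p.2) ∂(volume.prod volume) := by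
    refine lintegral_mono fun p => ?_
    have h1 : {z : EuclideanSpace ℝ (Fin d) | p.1 < f (l' - z)}
        = (fun l : EuclideanSpace ℝ (Fin d) => l' - l) ⁻¹' (A p.1) := rfl
    calc μ ({z : EuclideanSpace ℝ (Fin d) | p.1 < f (l' - z)} ∩ B p.2)
        ≤ min (μ ((fun l : EuclideanSpace ℝ (Fin d) => l' - l) ⁻¹' (A p.1))) (μ (B p.2)) := by
          rw [h1]
          exact le_min (measure_mono Set.inter_subset_left)
            (measure_mono Set.inter_subset_right)
      _ = min (μ (A p.1)) (μ (B p.2)) := by rw [htrans]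
      _ = μ (A p.1 ∩ B p.2) := (hmin _ _).symm
  have hlin : (∫⁻ l, ENNReal.ofReal (f (l' - l)) * ENNReal.ofReal (g l) ∂μ)
      ≤ ∫⁻ l, ENNReal.ofReal (f l) * ENNReal.ofReal (g l) ∂μ := by
    rw [hmainF, hmainF']
    exact hcompare
  -- convert to Bochner integrals
  have hint : Integrable (fun l => f l * g l) := by
    refine Integrable.mono (hfi.mul_const (g 0)) ((hfm.mul hgm).aestronglyMeasurable)
      (Filter.Eventually.of_forall fun l => ?_)
    rw [Real.norm_eq_abs, Real.norm_eq_abs, abs_of_nonneg (mul_nonneg (hf0 l) (hg0 l)),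
      abs_of_nonneg (mul_nonneg (hf0 l) (hg0 0))]
    exact mul_le_mul_of_nonneg_left (hgrad 0 l (by simp)) (hf0 l)
  have heq1 : ∫ l, f (l' - l) * g l
      = (∫⁻ l, ENNReal.ofReal (f (l' - l)) * ENNReal.ofReal (g l) ∂μ).toReal := by
    rw [integral_eq_lintegral_of_nonneg_ae
      (Filter.Eventually.of_forall fun l => mul_nonneg (hf0 _) (hg0 _))
      ((hFm.mul hgm).aestronglyMeasurable)]
    congr 1
    exact lintegral_congr fun l => ENNReal.ofReal_mul (hf0 _)
  have heq2 : ∫ l, f l * g l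
      = (∫⁻ l, ENNReal.ofReal (f l) * ENNReal.ofReal (g l) ∂μ).toReal := by
    rw [integral_eq_lintegral_of_nonneg_ae
      (Filter.Eventually.of_forall fun l => mul_nonneg (hf0 _) (hg0 _))
      ((hfm.mul hgm).aestronglyMeasurable)]
    congr 1
    exact lintegral_congr fun l => ENNReal.ofReal_mul (hf0 _)
  have hfin : (∫⁻ l, ENNReal.ofReal (f l) * ENNReal.ofReal (g l) ∂μ) ≠ ⊤ := by
    have hlt := hint.lintegral_lt_top
    rw [show (∫⁻ l, ENNReal.ofReal (f l) * ENNReal.ofReal (g l) ∂μ)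
        = ∫⁻ l, ENNReal.ofReal (f l * g l) ∂μ from
      lintegral_congr fun l => (ENNReal.ofReal_mul (hf0 _)).symm]
    exact hlt.ne
  rw [heq1, heq2]
  exact ENNReal.toReal_mono hfin hlin
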